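/- Let q = n1 - n2 with 0 ≤ n2 < n1, let A_1, …, A_{n1} be complex m1 × m2 matrices each of rank at most r, and let γ_{ik} ∈ ℂ (i = 1,…,q, k = 1,…,n1) be scalars such that γ_{i1} A_1 + γ_{i2} A_2 + ⋯ + γ_{i n1} A_{n1} = 0 for every i = 1,…,q. If the q × q matrix Γ = (γ_{ik})_{1 ≤ i,k ≤ q} is invertible, then dim C(A_1, A_2, …, A_{n1}) ≤ n2 · r. -/

import Mathlib

open Module Submodule Matrix

lemma finrank_biSup_le_aux {K V : Type*} [Field K] [AddCommGroup V] [Module K V]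
    [FiniteDimensional K V] {ι : Type*} (s : Finset ι) (f : ι → Submodule K V) (r : ℕ)
    (h : ∀ i ∈ s, Module.finrank K (f i) ≤ r) :
    Module.finrank K ↥(⨆ i ∈ s, f i) ≤ s.card * r := by
  classical
  induction s using Finset.induction_on with
  | empty => simp
  | @insert a s ha ih =>
    rw [Finset.iSup_insert, Finset.card_insert_of_notMem ha]
    calc Module.finrank K ↥(f a ⊔ ⨆ i ∈ s, f i)
        ≤ Module.finrank K (f a) + Module.finrank K ↥(⨆ i ∈ s, f i) :=
          Submodule.finrank_add_le_finrank_add_finrank _ _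
      _ ≤ r + s.card * r :=
          Nat.add_le_add (h a (Finset.mem_insert_self a s))
            (ih fun i hi => h i (Finset.mem_insert_of_mem hi))
      _ = (s.card + 1) * r := by ring

/-- If `A_1,…,A_{n1}` are complex `m1 × m2` matrices of rank at most
`r` satisfying `γ_{i1} A_1 + ⋯ + γ_{i n1} A_{n1} = 0` for `i = 1,…,q` with
`q = n1 - n2`, `0 ≤ n2 < n1`, and the `q × q` matrix `Γ = (γ_{ik})_{i,k ≤ q}` is
invertible, then `dim C(A_1,…,A_{n1}) ≤ n2 · r`. -/
theorem stmt1 (n1 n2 m1 m2 r : ℕ) (hn : n2 < n1)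
    (A : Fin n1 → Matrix (Fin m1) (Fin m2) ℂ)
    (hrank : ∀ k : Fin n1, (A k).rank ≤ r)
    (γ : Fin (n1 - n2) → Fin n1 → ℂ)
    (hsum : ∀ i : Fin (n1 - n2), ∑ k : Fin n1, γ i k • A k = 0)
    (hΓ : IsUnit (Matrix.of fun i k : Fin (n1 - n2) =>
      γ i (Fin.castLE (Nat.sub_le n1 n2) k)).det) :
    Module.finrank ℂ
      (Submodule.span ℂ
        (Set.range fun p : Fin n1 × Fin m2 => fun i : Fin m1 => A p.1 i p.2)) ≤
      n2 * r := by
  classical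
  have hsplit : (n1 - n2) + n2 = n1 := Nat.sub_add_cancel hn.le
  -- tail indices
  set τ : Fin n2 → Fin n1 := fun k => Fin.cast hsplit (Fin.natAdd (n1 - n2) k) with hτ
  -- span of tail matrices
  set W : Submodule ℂ (Matrix (Fin m1) (Fin m2) ℂ) :=
    Submodule.span ℂ (Set.range fun k : Fin n2 => A (τ k)) with hW
  set Γ : Matrix (Fin (n1 - n2)) (Fin (n1 - n2)) ℂ :=
    Matrix.of (fun i k : Fin (n1 - n2) => γ i (Fin.castLE (Nat.sub_le n1 n2) k)) with hΓdef
  have hBΓ : Γ⁻¹ * Γ = 1 := Matrix.nonsing_inv_mul Γ hΓ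
  -- every A k lies in W
  have hmem : ∀ k : Fin n1, A k ∈ W := by
    intro k
    by_cases hk : (k : ℕ) < n1 - n2
    · -- head case via the relations
      set j : Fin (n1 - n2) := ⟨k, hk⟩ with hj
      have key : ∑ i : Fin (n1 - n2), Γ⁻¹ j i • (∑ l : Fin n1, γ i l • A l) = 0 := by
        simp [hsum]
      have key2 : ∑ l : Fin n1, (∑ i : Fin (n1 - n2), Γ⁻¹ j i * γ i l) • A l = 0 := by
        calc ∑ l : Fin n1, (∑ i : Fin (n1 - n2), Γ⁻¹ j i * γ i l) • A l
            = ∑ l : Fin n1, ∑ i : Fin (n1 - n2), (Γ⁻¹ j i * γ i l) • A l := by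
              simp [Finset.sum_smul]
          _ = ∑ i : Fin (n1 - n2), ∑ l : Fin n1, (Γ⁻¹ j i * γ i l) • A l :=
              Finset.sum_comm
          _ = ∑ i : Fin (n1 - n2), Γ⁻¹ j i • ∑ l : Fin n1, γ i l • A l := by
              simp [Finset.smul_sum, smul_smul]
          _ = 0 := key
      -- reindex Fin n1 as Fin ((n1 - n2) + n2)
      have key3 : ∑ l : Fin ((n1 - n2) + n2),
          (∑ i : Fin (n1 - n2), Γ⁻¹ j i * γ i (Fin.cast hsplit l)) •
          A (Fin.cast hsplit l) = 0 := by
        rw [← key2]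
        exact Fintype.sum_equiv (finCongr hsplit) _ _ (fun l => rfl)
      rw [Fin.sum_univ_add] at key3
      have hhead : ∀ a : Fin (n1 - n2),
          (∑ i : Fin (n1 - n2), Γ⁻¹ j i * γ i (Fin.cast hsplit (Fin.castAdd n2 a))) =
          (1 : Matrix (Fin (n1 - n2)) (Fin (n1 - n2)) ℂ) j a := by
        intro a
        rw [← hBΓ]
        have h1 : Fin.cast hsplit (Fin.castAdd n2 a) = Fin.castLE (Nat.sub_le n1 n2) a := by
          ext; simp
        rw [h1]
        rfl
      simp only [hhead] at key3
      have hsingle : ∑ a : Fin (n1 - n2), (1 : Matrix (Fin (n1 - n2)) (Fin (n1 - n2)) ℂ) j a •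
          A (Fin.cast hsplit (Fin.castAdd n2 a))
          = A (Fin.cast hsplit (Fin.castAdd n2 j)) := by
        rw [Finset.sum_eq_single j]
        · simp [Matrix.one_apply]
        · intro b _ hb
          simp [Matrix.one_apply, (Ne.symm hb)]
        · simp
      rw [hsingle] at key3
      have hkj : Fin.cast hsplit (Fin.castAdd n2 j) = k := by ext; simp [hj]
      rw [hkj] at key3
      have heq : A k = -∑ b : Fin n2,
          (∑ i : Fin (n1 - n2), Γ⁻¹ j i * γ i (Fin.cast hsplit (Fin.natAdd (n1 - n2) b))) •
          A (Fin.cast hsplit (Fin.natAdd (n1 - n2) b)) := by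
        rw [eq_neg_iff_add_eq_zero]
        exact key3
      rw [heq]
      exact neg_mem (Submodule.sum_mem _ fun b _ => Submodule.smul_mem _ _
        (Submodule.subset_span ⟨b, rfl⟩))
    · -- tail case
      push_neg at hk
      have hb : (k : ℕ) - (n1 - n2) < n2 := by omega
      have h1 : τ ⟨(k : ℕ) - (n1 - n2), hb⟩ = k := by
        ext
        simp [hτ]
        omega
      exact Submodule.subset_span ⟨⟨(k : ℕ) - (n1 - n2), hb⟩, congrArg A h1⟩
  -- the target column space
  set T : Submodule ℂ (Fin m1 → ℂ) :=
    ⨆ k : Fin n2, Submodule.span ℂ (Set.range (A (τ k))ᵀ) with hT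
  -- column extraction linear maps
  have hcol : ∀ (k : Fin n1) (j : Fin m2), (fun i => A k i j) ∈ T := by
    intro k j
    let L : Matrix (Fin m1) (Fin m2) ℂ →ₗ[ℂ] (Fin m1 → ℂ) :=
      { toFun := fun M i => M i j
        map_add' := fun M N => rfl
        map_smul' := fun c M => rfl }
    have h1 : L (A k) ∈ Submodule.span ℂ (L '' Set.range fun b : Fin n2 => A (τ b)) :=
      Submodule.apply_mem_span_image_of_mem_span L (hmem k)
    have h2 : Submodule.span ℂ (L '' Set.range fun b : Fin n2 => A (τ b)) ≤ T := by
      rw [Submodule.span_le]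
      rintro x ⟨M, ⟨b, rfl⟩, rfl⟩
      refine le_iSup (fun k : Fin n2 => Submodule.span ℂ (Set.range (A (τ k))ᵀ)) b ?_
      exact Submodule.subset_span ⟨j, rfl⟩
    exact h2 h1
  have hle : Submodule.span ℂ
      (Set.range fun p : Fin n1 × Fin m2 => fun i : Fin m1 => A p.1 i p.2) ≤ T := by
    rw [Submodule.span_le]
    rintro x ⟨⟨k, j⟩, rfl⟩
    exact hcol k j
  have hmain : Module.finrank ℂ
      (Submodule.span ℂ
        (Set.range fun p : Fin n1 × Fin m2 => fun i : Fin m1 => A p.1 i p.2))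
      ≤ Module.finrank ℂ T := Submodule.finrank_mono hle
  refine hmain.trans ?_
  have h3 := finrank_biSup_le_aux (K := ℂ) (Finset.univ : Finset (Fin n2))
      (fun k => Submodule.span ℂ (Set.range (A (τ k))ᵀ)) r
    (fun k _ => by rw [show Set.range (A (τ k))ᵀ = Set.range (A (τ k)).col from rfl, ← Matrix.rank_eq_finrank_span_cols]; exact hrank (τ k))
  have h4 : (⨆ i ∈ (Finset.univ : Finset (Fin n2)), Submodule.span ℂ (Set.range (A (τ i))ᵀ)) = T := by
    rw [hT]
    simp
  rw [h4] at h3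
  simpa using h3
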